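/- For every r ≥ 0 and all 1 ≤ i ≤ n, 1 ≤ a ≤ k, the following identity of ℂ-linear endomorphisms of P holds: Σ_{l=1}^{n} (E^r)_{il} ∘ X_{al} = Σ_{b=1}^{k} ((E' + (n−k)·I_k)^r)_{ab} ∘ X_{bi}, where E' + (n−k)·I_k denotes the k×k matrix over End_ℂ(P) obtained by adding (n−k) times the identity operator along the diagonal of E', and matrix powers are computed in the matrix algebra over End_ℂ(P). -/

import Mathlib

noncomputable section

/-- The polynomial ring `P = ℂ[x_{ai} : 1 ≤ a ≤ k, 1 ≤ i ≤ n]` of polynomial functions on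
`k × n` matrices. -/
abbrev Pring (n k : ℕ) := MvPolynomial (Fin k × Fin n) ℂ

/-- `X_{ai}`: multiplication by the variable `x_{ai}`. -/
def Xop (n k : ℕ) (a : Fin k) (i : Fin n) : Module.End ℂ (Pring n k) :=
  LinearMap.mulLeft ℂ (MvPolynomial.X (a, i))

/-- `D_{ai}`: the partial derivative `∂/∂x_{ai}`. -/
def Dop (n k : ℕ) (a : Fin k) (i : Fin n) : Module.End ℂ (Pring n k) :=
  (MvPolynomial.pderiv (a, i)).toLinearMap

/-- The polarization operator `E_{ij} = Σ_a X_{ai} ∘ D_{aj}` (an entry of `XᵗD`),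
realizing `gl_n` on `P`. -/
def Eop (n k : ℕ) (i j : Fin n) : Module.End ℂ (Pring n k) :=
  ∑ a : Fin k, Xop n k a i * Dop n k a j

/-- The polarization operator `E'_{ab} = Σ_i X_{ai} ∘ D_{bi}` (an entry of `XDᵗ`),
realizing `gl_k` on `P`. -/
def E'op (n k : ℕ) (a b : Fin k) : Module.End ℂ (Pring n k) :=
  ∑ i : Fin n, Xop n k a i * Dop n k b i

/-- The `n × n` matrix `E` over `End_ℂ P` with entries `E_{ij}`. -/
def EmatW (n k : ℕ) : Matrix (Fin n) (Fin n) (Module.End ℂ (Pring n k)) :=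
  fun i j => Eop n k i j

/-- The `k × k` matrix `E'` over `End_ℂ P` with entries `E'_{ab}`. -/
def E'matW (n k : ℕ) : Matrix (Fin k) (Fin k) (Module.End ℂ (Pring n k)) :=
  fun a b => E'op n k a b

/- ### Auxiliary lemmas -/

open MvPolynomial

lemma pd_comm {σ R : Type*} [CommRing R] (i j : σ) (p : MvPolynomial σ R) :
    pderiv i (pderiv j p) = pderiv j (pderiv i p) := by
  classical
  induction p using MvPolynomial.induction_on with
  | C a => simp
  | add p q hp hq => simp [hp, hq]
  | mul_X p u hp =>
      rcases eq_or_ne j u with h | h <;> rcases eq_or_ne i u with h' | h'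
      · subst h; subst h'; simp [pderiv_mul, hp]
      · subst h; simp [pderiv_mul, hp, h', Pi.single_apply]; ring
      · subst h'; simp [pderiv_mul, hp, h, Pi.single_apply]; ring
      · simp [pderiv_mul, hp, h, h', Pi.single_apply]

lemma XX_comm (n k : ℕ) (a b : Fin k) (i j : Fin n) :
    Xop n k a i * Xop n k b j = Xop n k b j * Xop n k a i := by
  refine LinearMap.ext fun p => ?_
  simp only [Xop, Module.End.mul_apply, LinearMap.mulLeft_apply]
  ring

lemma DD_comm (n k : ℕ) (a b : Fin k) (i j : Fin n) :
    Dop n k a i * Dop n k b j = Dop n k b j * Dop n k a i := by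
  refine LinearMap.ext fun p => ?_
  simpa [Dop, Module.End.mul_apply] using pd_comm (a, i) (b, j) p

lemma DX (n k : ℕ) (a b : Fin k) (i j : Fin n) :
    Dop n k a i * Xop n k b j =
      Xop n k b j * Dop n k a i + (if (a, i) = (b, j) then 1 else 0) := by
  refine LinearMap.ext fun p => ?_
  by_cases h : (a, i) = (b, j)
  · simp [Dop, Xop, Module.End.mul_apply, LinearMap.mulLeft_apply, h, pderiv_mul, mul_comm]
    ring
  · simp [Dop, Xop, Module.End.mul_apply, LinearMap.mulLeft_apply, h, pderiv_mul,
      pderiv_X_of_ne (Ne.symm h), mul_comm]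

lemma XD_mul_XD (n k : ℕ) (a b c d : Fin k) (i j l m : Fin n) :
    (Xop n k a i * Dop n k b j) * (Xop n k c l * Dop n k d m)
      = (Xop n k a i * Xop n k c l) * (Dop n k b j * Dop n k d m)
        + (if (b, j) = (c, l) then Xop n k a i * Dop n k d m else 0) := by
  have h := DX n k b c j l
  calc (Xop n k a i * Dop n k b j) * (Xop n k c l * Dop n k d m)
      = Xop n k a i * ((Dop n k b j * Xop n k c l) * Dop n k d m) := by
        simp only [mul_assoc]
    _ = Xop n k a i * (((Xop n k c l * Dop n k b j)
          + (if (b, j) = (c, l) then 1 else 0)) * Dop n k d m) := by rw [h]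
    _ = _ := by
        by_cases hc : (b, j) = (c, l) <;>
          simp [hc, add_mul, mul_add, mul_assoc]

lemma EE'_comm (n k : ℕ) (i j : Fin n) (a b : Fin k) :
    Eop n k i j * E'op n k a b = E'op n k a b * Eop n k i j := by
  unfold Eop E'op
  rw [Finset.sum_mul_sum, Finset.sum_mul_sum]
  have L : ∀ c : Fin k, ∀ l : Fin n,
      (Xop n k c i * Dop n k c j) * (Xop n k a l * Dop n k b l)
        = (Xop n k c i * Xop n k a l) * (Dop n k c j * Dop n k b l)
          + (if (c, j) = (a, l) then Xop n k c i * Dop n k b l else 0) :=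
    fun c l => XD_mul_XD n k c c a b i j l l
  have R : ∀ l : Fin n, ∀ c : Fin k,
      (Xop n k a l * Dop n k b l) * (Xop n k c i * Dop n k c j)
        = (Xop n k a l * Xop n k c i) * (Dop n k b l * Dop n k c j)
          + (if (b, l) = (c, i) then Xop n k a l * Dop n k c j else 0) :=
    fun l c => XD_mul_XD n k a b c c l l i j
  simp only [L, R, Finset.sum_add_distrib, Prod.mk.injEq]
  have hif1 : (∑ c : Fin k, ∑ l : Fin n,
      (if c = a ∧ j = l then Xop n k c i * Dop n k b l else 0))
      = Xop n k a i * Dop n k b j := by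
    simp [Finset.sum_ite_eq, Finset.sum_ite_eq', ite_and]
  have hif2 : (∑ l : Fin n, ∑ c : Fin k,
      (if b = c ∧ l = i then Xop n k a l * Dop n k c j else 0))
      = Xop n k a i * Dop n k b j := by
    simp [Finset.sum_ite_eq, Finset.sum_ite_eq', ite_and]
  rw [hif1, hif2]
  congr 1
  rw [Finset.sum_comm]
  apply Finset.sum_congr rfl
  intro l _
  apply Finset.sum_congr rfl
  intro c _
  rw [XX_comm, DD_comm]

/-- The matrix `F = E' + (n-k)·1`. -/
def Fmat (n k : ℕ) : Matrix (Fin k) (Fin k) (Module.End ℂ (Pring n k)) :=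
  E'matW n k + ((n : ℂ) - (k : ℂ)) • 1

lemma E_comm_Fentry (n k : ℕ) (i j : Fin n) (a b : Fin k) :
    Commute (Eop n k i j) (Fmat n k a b) := by
  unfold Fmat
  simp only [Matrix.add_apply, Matrix.smul_apply, Matrix.one_apply]
  apply Commute.add_right
  · exact EE'_comm n k i j a b
  · split_ifs <;> simp [Commute, SemiconjBy]

lemma E_comm_Fpow (n k : ℕ) (r : ℕ) (i j : Fin n) (a b : Fin k) :
    Commute (Eop n k i j) ((Fmat n k ^ r) a b) := by
  induction r generalizing a b with
  | zero =>
      simp only [pow_zero, Matrix.one_apply]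
      split_ifs <;> simp [Commute, SemiconjBy]
  | succ r ih =>
      rw [pow_succ, Matrix.mul_apply]
      exact Commute.sum_right _ _ _ fun c _ => (ih a c).mul_right (E_comm_Fentry n k i j c b)

/-- The base case `r = 1`. -/
lemma base_case (n k : ℕ) (i : Fin n) (a : Fin k) :
    ∑ l : Fin n, Eop n k i l * Xop n k a l = ∑ b : Fin k, Fmat n k a b * Xop n k b i := by
  -- LHS
  have hL : ∀ l : Fin n, Eop n k i l * Xop n k a l
      = (∑ c : Fin k, (Xop n k c i * Xop n k a l) * Dop n k c l) + Xop n k a i := by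
    intro l
    unfold Eop
    rw [Finset.sum_mul]
    have : ∀ c : Fin k, (Xop n k c i * Dop n k c l) * Xop n k a l
        = (Xop n k c i * Xop n k a l) * Dop n k c l
          + (if c = a then Xop n k c i else 0) := by
      intro c
      rw [mul_assoc, DX n k c a l l, mul_add, ← mul_assoc]
      by_cases hc : c = a <;> simp [hc, Prod.ext_iff]
    simp only [this, Finset.sum_add_distrib, Finset.sum_ite_eq', Finset.mem_univ, if_true]
  -- RHS
  have hR : ∀ b : Fin k, E'op n k a b * Xop n k b i
      = (∑ l : Fin n, (Xop n k b i * Xop n k a l) * Dop n k b l) + Xop n k a i := by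
    intro b
    unfold E'op
    rw [Finset.sum_mul]
    have : ∀ l : Fin n, (Xop n k a l * Dop n k b l) * Xop n k b i
        = (Xop n k b i * Xop n k a l) * Dop n k b l
          + (if l = i then Xop n k a l else 0) := by
      intro l
      rw [mul_assoc, DX n k b b l i, mul_add, ← mul_assoc, XX_comm n k a b l i]
      by_cases hl : l = i <;> simp [hl, Prod.ext_iff]
    simp only [this, Finset.sum_add_distrib, Finset.sum_ite_eq', Finset.mem_univ, if_true]
  have hFX : ∀ b : Fin k, Fmat n k a b * Xop n k b i
      = E'op n k a b * Xop n k b i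
        + (if a = b then ((n : ℂ) - (k : ℂ)) • Xop n k b i else 0) := by
    intro b
    unfold Fmat
    simp only [Matrix.add_apply, Matrix.smul_apply, Matrix.one_apply, E'matW]
    by_cases hb : a = b <;> simp [hb, add_mul, smul_mul_assoc]
  calc ∑ l : Fin n, Eop n k i l * Xop n k a l
      = ∑ l : Fin n, ((∑ c : Fin k, (Xop n k c i * Xop n k a l) * Dop n k c l)
          + Xop n k a i) := by simp only [hL]
    _ = (∑ l : Fin n, ∑ c : Fin k, (Xop n k c i * Xop n k a l) * Dop n k c l)
          + n • Xop n k a i := by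
        rw [Finset.sum_add_distrib, Finset.sum_const, Finset.card_univ, Fintype.card_fin]
    _ = (∑ b : Fin k, ∑ l : Fin n, (Xop n k b i * Xop n k a l) * Dop n k b l)
          + (k • Xop n k a i + ((n : ℂ) - (k : ℂ)) • Xop n k a i) := by
        rw [Finset.sum_comm]
        congr 1
        have : (k : ℂ) • Xop n k a i + ((n : ℂ) - (k : ℂ)) • Xop n k a i
            = (n : ℂ) • Xop n k a i := by
          rw [← add_smul]; ring_nf
        rw [← Nat.cast_smul_eq_nsmul ℂ, ← Nat.cast_smul_eq_nsmul ℂ k, this]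
    _ = ∑ b : Fin k, Fmat n k a b * Xop n k b i := by
        simp only [hFX, hR, Finset.sum_add_distrib, Finset.sum_ite_eq, Finset.mem_univ,
          if_true, Finset.sum_const, Finset.card_univ, Fintype.card_fin]
        abel

/-- for every `r ≥ 0` and all `i, a`, the identity
`Σ_{l=1}^{n} (E^r)_{il} ∘ X_{al} = Σ_{b=1}^{k} ((E' + (n−k)·I_k)^r)_{ab} ∘ X_{bi}`
holds in `End_ℂ P` (matrix powers computed over `End_ℂ P`). -/
theorem stmt_12 (n k : ℕ) (r : ℕ) (i : Fin n) (a : Fin k) :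
    ∑ l : Fin n, (EmatW n k ^ r) i l * Xop n k a l =
      ∑ b : Fin k, ((E'matW n k + ((n : ℂ) - (k : ℂ)) • 1) ^ r) a b * Xop n k b i := by
  show ∑ l : Fin n, (EmatW n k ^ r) i l * Xop n k a l
      = ∑ b : Fin k, (Fmat n k ^ r) a b * Xop n k b i
  induction r generalizing i with
  | zero => simp [Matrix.one_apply, ite_mul, Finset.sum_ite_eq', Finset.sum_ite_eq]
  | succ r ih =>
      calc ∑ l : Fin n, (EmatW n k ^ (r + 1)) i l * Xop n k a l
          = ∑ l : Fin n, ∑ m : Fin n, Eop n k i m * ((EmatW n k ^ r) m l * Xop n k a l) := by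
            simp only [pow_succ', Matrix.mul_apply, Finset.sum_mul, mul_assoc]
            rfl
        _ = ∑ m : Fin n, Eop n k i m * (∑ l : Fin n, (EmatW n k ^ r) m l * Xop n k a l) := by
            rw [Finset.sum_comm]
            simp only [Finset.mul_sum]
        _ = ∑ m : Fin n, Eop n k i m * (∑ b : Fin k, (Fmat n k ^ r) a b * Xop n k b m) := by
            simp only [ih]
        _ = ∑ b : Fin k, (Fmat n k ^ r) a b * (∑ m : Fin n, Eop n k i m * Xop n k b m) := by
            simp only [Finset.mul_sum]
            rw [Finset.sum_comm]
            apply Finset.sum_congr rfl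
            intro b _
            apply Finset.sum_congr rfl
            intro m _
            rw [← mul_assoc, ← mul_assoc, (E_comm_Fpow n k r i m a b).eq]
        _ = ∑ b : Fin k, (Fmat n k ^ r) a b * (∑ c : Fin k, Fmat n k b c * Xop n k c i) := by
            simp only [base_case]
        _ = ∑ c : Fin k, (Fmat n k ^ (r + 1)) a c * Xop n k c i := by
            simp only [pow_succ, Matrix.mul_apply, Finset.sum_mul, Finset.mul_sum, ← mul_assoc]
            rw [Finset.sum_comm]
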